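/- arXiv:1912.10077 — 8 statements merged into one kernel-verified Lean document; each statement's English description precedes it below -/
import Mathlib

section
/- Let d ≥ 1, n ≥ 2, 1 ≤ p < ∞, and let f : ℝ^{d×n} → ℝ^{d×n} be continuous, permutation equivariant, and supported in [0,1]^{d×n}. Then for every ε > 0 there exists δ > 0 with 1/δ ∈ ℕ such that the piecewise constant function f̄(X) = Σ_{L ∈ G_δ} f(C_L) 1{X ∈ S_L}, where C_L ∈ S_L is the center point of the cube S_L, is permutation equivariant and satisfies d_p(f, f̄) ≤ ε. -/
open MeasureTheory Matrix Filter
open scoped Classical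

noncomputable section

/-- `d × n` real matrices: an input sequence of `n` tokens with embedding dimension `d`. -/
abbrev Mat (d n : ℕ) := Matrix (Fin d) (Fin n) ℝ
/-- Lebesgue (product) measure on `d × n` matrices. -/
instance (d n : ℕ) : MeasureSpace (Mat d n) :=
  inferInstanceAs (MeasureSpace (Fin d → Fin n → ℝ))
/-- `d_p(f₁,f₂) = (∫ ‖f₁(X) − f₂(X)‖_p^p dX)^{1/p}` with the entry-wise `ℓ^p` norm,
valued in `ℝ≥0∞`. -/
def lpDist {d n : ℕ} (p : ℝ) (f g : Mat d n → Mat d n) : ENNReal :=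
  (∫⁻ X : Mat d n, ENNReal.ofReal (∑ i, ∑ j, |f X i j - g X i j| ^ p)) ^ (1 / p)
/-- `f` is permutation equivariant: `f(XP) = f(X)P` for every permutation matrix `P`. -/
def PermEquivariant {d n : ℕ} (f : Mat d n → Mat d n) : Prop :=
  ∀ (X : Mat d n) (π : Equiv.Perm (Fin n)), f (X * π.permMatrix ℝ) = f X * π.permMatrix ℝ

lemma cell_unique {N : ℕ} {x : ℝ} {a b : Fin N}
    (h1 : (a:ℝ) * (N:ℝ)⁻¹ ≤ x) (h2 : x < (a:ℝ) * (N:ℝ)⁻¹ + (N:ℝ)⁻¹)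
    (h3 : (b:ℝ) * (N:ℝ)⁻¹ ≤ x) (h4 : x < (b:ℝ) * (N:ℝ)⁻¹ + (N:ℝ)⁻¹) : a = b := by
  have hN : 0 < N := a.pos
  have hδ : (0:ℝ) < (N:ℝ)⁻¹ := by positivity
  have key : (a:ℕ) = (b:ℕ) := by
    by_contra h
    rcases Nat.lt_or_ge a b with hlt | hge
    · have hc : ((a:ℝ) + 1) ≤ (b:ℝ) := by exact_mod_cast hlt
      nlinarith
    · have hlt : (b:ℕ) < (a:ℕ) := lt_of_le_of_ne hge (Ne.symm h)
      have hc : ((b:ℝ) + 1) ≤ (a:ℝ) := by exact_mod_cast hlt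
      nlinarith
  exact Fin.ext key

lemma cell_exists {N : ℕ} (hN : 0 < N) {x : ℝ} (h0 : 0 ≤ x) (h1 : x < 1) :
    ∃ a : Fin N, (a:ℝ) * (N:ℝ)⁻¹ ≤ x ∧ x < (a:ℝ) * (N:ℝ)⁻¹ + (N:ℝ)⁻¹ := by
  have hNR : (0:ℝ) < N := by exact_mod_cast hN
  have hxN : 0 ≤ x * N := by positivity
  have hflt : ⌊x * N⌋₊ < N := by
    rw [Nat.floor_lt hxN]; nlinarith
  refine ⟨⟨⌊x * N⌋₊, hflt⟩, ?_, ?_⟩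
  · have h := Nat.floor_le hxN
    calc ((⌊x * N⌋₊:ℝ)) * (N:ℝ)⁻¹ ≤ (x * N) * (N:ℝ)⁻¹ :=
          mul_le_mul_of_nonneg_right h (by positivity)
      _ = x := by field_simp
  · have h := Nat.lt_floor_add_one (x * N)
    have h2 : (x * N) * (N:ℝ)⁻¹ < ((⌊x * N⌋₊:ℝ) + 1) * (N:ℝ)⁻¹ :=
      mul_lt_mul_of_pos_right h (by positivity)
    have h3 : (x * N) * (N:ℝ)⁻¹ = x := by field_simp
    rw [h3] at h2
    calc x < ((⌊x * N⌋₊:ℝ) + 1) * (N:ℝ)⁻¹ := h2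
      _ = ((⌊x * N⌋₊:ℝ)) * (N:ℝ)⁻¹ + (N:ℝ)⁻¹ := by ring


/-- **Step 1** (Lemma 5): a continuous permutation equivariant function supported in
`[0,1]^{d×n}` can be approximated in `d_p` by the permutation-equivariant piecewise
constant function `f̄(X) = Σ_{L ∈ G_δ} f(C_L) 1{X ∈ S_L}`, where `δ = 1/N`, the grid
`G_δ` is indexed by `κ : Fin d → Fin n → Fin N` via `L_{i,j} = κ_{i,j} δ`, and `C_L`
is the center of the cube `S_L = Π [L_{i,j}, L_{i,j} + δ)`. -/
theorem stmt_4 (d n : ℕ) (hd : 1 ≤ d) (hn : 2 ≤ n) (p : ℝ) (hp : 1 ≤ p)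
    (ε : ℝ) (hε : 0 < ε) (f : Mat d n → Mat d n)
    (hcont : Continuous f) (hequiv : PermEquivariant f)
    (hsupp : Function.support f ⊆ {X : Mat d n | ∀ i j, X i j ∈ Set.Icc (0:ℝ) 1}) :
    ∃ N : ℕ, 1 ≤ N ∧
      ∀ fbar : Mat d n → Mat d n,
        (fbar = fun X => ∑ κ : Fin d → Fin n → Fin N,
          if (∀ i j, ((κ i j : ℕ) : ℝ) * ((N:ℝ)⁻¹) ≤ X i j ∧
                X i j < ((κ i j : ℕ) : ℝ) * ((N:ℝ)⁻¹) + (N:ℝ)⁻¹) then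
            f (Matrix.of fun i j => ((κ i j : ℕ) : ℝ) * ((N:ℝ)⁻¹) + (N:ℝ)⁻¹ / 2)
          else 0) →
        PermEquivariant fbar ∧ lpDist p f fbar ≤ ENNReal.ofReal ε := by
  -- view `f` as a map of pi types to get uniform structure
  set K : Set (Mat d n) := {X : Mat d n | ∀ i j, X i j ∈ Set.Icc (0:ℝ) 1} with hKdef
  have hKeq : K = Set.pi Set.univ (fun i : Fin d => Set.pi Set.univ
      (fun _ : Fin n => Set.Icc (0:ℝ) 1)) := by
    ext X
    simp only [hKdef, Set.mem_setOf_eq, Set.mem_pi, Set.mem_univ, forall_true_left,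
      Set.mem_Icc, true_implies]
    exact ⟨fun h i _ j _ => h i j, fun h i j => h i trivial j trivial⟩
  have hKcompact : IsCompact K := by
    rw [hKeq]
    exact isCompact_univ_pi fun i => isCompact_univ_pi fun j => isCompact_Icc
  have hzero : ∀ X : Mat d n, X ∉ K → f X = 0 := by
    intro X hX
    by_contra h
    exact hX (hsupp (Function.mem_support.2 h))
  have hF : HasCompactSupport f := HasCompactSupport.intro hKcompact hzero
  -- transfer to pi types
  let F : (Fin d → Fin n → ℝ) → (Fin d → Fin n → ℝ) := f
  have hFc : Continuous F := hcont
  have hFcs : HasCompactSupport F := hF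
  have hUC : UniformContinuous F := hFcs.uniformContinuous_of_continuous hFc
  -- choose η and ρ
  have hdn : (1:ℝ) ≤ (d:ℝ) * n := by
    have : (1:ℝ) ≤ (d:ℝ) := by exact_mod_cast hd
    have h2 : (1:ℝ) ≤ (n:ℝ) := by exact_mod_cast le_trans one_le_two hn
    nlinarith
  have hdnpos : (0:ℝ) < (d:ℝ) * n := lt_of_lt_of_le one_pos hdn
  set η : ℝ := ε / ((d:ℝ) * n) with hηdef
  have hη : 0 < η := by positivity
  obtain ⟨ρ, hρ, himp⟩ := Metric.uniformContinuous_iff.1 hUC η hη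
  set N : ℕ := ⌈ρ⁻¹⌉₊ + 1 with hNdef
  have hN1 : 1 ≤ N := Nat.le_add_left 1 _
  have hNpos : 0 < N := hN1
  have hNR : (0:ℝ) < N := by exact_mod_cast hNpos
  set δ : ℝ := (N:ℝ)⁻¹ with hδdef
  have hδpos : 0 < δ := by positivity
  have hδρ : δ < ρ := by
    have h1 : ρ⁻¹ < (N:ℝ) := by
      calc ρ⁻¹ ≤ (⌈ρ⁻¹⌉₊ : ℝ) := Nat.le_ceil _
        _ < (N:ℝ) := by exact_mod_cast Nat.lt_succ_self _
    have := inv_strictAnti₀ (by positivity : (0:ℝ) < ρ⁻¹) h1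
    simpa using this
  refine ⟨N, hN1, ?_⟩
  intro fbar hfbar
  subst hfbar
  -- notation for centers
  set C : (Fin d → Fin n → Fin N) → Mat d n :=
    fun κ => Matrix.of fun i j => ((κ i j : ℕ) : ℝ) * ((N:ℝ)⁻¹) + (N:ℝ)⁻¹ / 2 with hCdef
  set G : Mat d n → Mat d n := fun X => ∑ κ : Fin d → Fin n → Fin N,
      if (∀ i j, ((κ i j : ℕ) : ℝ) * ((N:ℝ)⁻¹) ≤ X i j ∧
            X i j < ((κ i j : ℕ) : ℝ) * ((N:ℝ)⁻¹) + (N:ℝ)⁻¹) then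
        f (Matrix.of fun i j => ((κ i j : ℕ) : ℝ) * ((N:ℝ)⁻¹) + (N:ℝ)⁻¹ / 2)
      else 0 with hGdef
  constructor
  · -- equivariance
    intro X σ
    simp only [hGdef]
    have hmul : ∀ M : Mat d n, M * σ.permMatrix ℝ = M.submatrix id σ.symm := fun M =>
      PEquiv.mul_toMatrix_toPEquiv M σ
    rw [hmul, hmul]
    ext i j
    rw [Matrix.submatrix_apply]
    rw [Matrix.sum_apply, Matrix.sum_apply]
    simp only [id]
    -- reindexing equivalence
    refine Fintype.sum_equiv
      ⟨fun κ a b => κ a (σ b), fun κ a b => κ a (σ.symm b),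
        fun κ => by funext a b; simp, fun κ => by funext a b; simp⟩
      _ _ ?_
    intro κ
    simp only [Equiv.coe_fn_mk]
    have hcond : (∀ a b, ((κ a b : ℕ) : ℝ) * ((N:ℝ)⁻¹) ≤ (X.submatrix id σ.symm) a b ∧
          (X.submatrix id σ.symm) a b < ((κ a b : ℕ) : ℝ) * ((N:ℝ)⁻¹) + (N:ℝ)⁻¹)
        ↔ (∀ a b, (((κ a (σ b) : ℕ)) : ℝ) * ((N:ℝ)⁻¹) ≤ X a b ∧
          X a b < (((κ a (σ b) : ℕ)) : ℝ) * ((N:ℝ)⁻¹) + (N:ℝ)⁻¹) := by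
      constructor
      · intro h a b
        have := h a (σ b)
        simpa using this
      · intro h a b
        have := h a (σ.symm b)
        simpa using this
    have hval : f (Matrix.of fun a b => ((κ a b : ℕ) : ℝ) * ((N:ℝ)⁻¹) + (N:ℝ)⁻¹ / 2) i j
        = f (Matrix.of fun a b => (((κ a (σ b) : ℕ)) : ℝ) * ((N:ℝ)⁻¹) + (N:ℝ)⁻¹ / 2) i
            (σ.symm j) := by
      have hCeq : (Matrix.of fun a b => ((κ a b : ℕ) : ℝ) * ((N:ℝ)⁻¹) + (N:ℝ)⁻¹ / 2 : Mat d n)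
          = (Matrix.of fun a b => (((κ a (σ b) : ℕ)) : ℝ) * ((N:ℝ)⁻¹) + (N:ℝ)⁻¹ / 2 : Mat d n)
            * σ.permMatrix ℝ := by
        rw [hmul]
        ext a b
        simp [Matrix.submatrix_apply]
      rw [hCeq, hequiv, hmul]
      simp [Matrix.submatrix_apply]
    by_cases hc : (∀ a b, ((κ a b : ℕ) : ℝ) * ((N:ℝ)⁻¹) ≤ (X.submatrix id σ.symm) a b ∧
          (X.submatrix id σ.symm) a b < ((κ a b : ℕ) : ℝ) * ((N:ℝ)⁻¹) + (N:ℝ)⁻¹)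
    · rw [if_pos hc, if_pos (hcond.1 hc)]
      exact hval
    · rw [if_neg hc, if_neg (fun h => hc (hcond.2 h))]
      simp
  · -- the Lp bound
    -- the sum collapses on each grid cell
    have hcollapse : ∀ (X : Mat d n) (κ₀ : Fin d → Fin n → Fin N),
        (∀ i j, ((κ₀ i j : ℕ) : ℝ) * ((N:ℝ)⁻¹) ≤ X i j ∧
            X i j < ((κ₀ i j : ℕ) : ℝ) * ((N:ℝ)⁻¹) + (N:ℝ)⁻¹) →
        G X = f (Matrix.of fun i j => ((κ₀ i j : ℕ) : ℝ) * ((N:ℝ)⁻¹) + (N:ℝ)⁻¹ / 2) := by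
      intro X κ₀ h0
      simp only [hGdef]
      rw [Finset.sum_eq_single_of_mem κ₀ (Finset.mem_univ _)]
      · rw [if_pos h0]
      · intro κ _ hne
        rw [if_neg]
        intro h
        apply hne
        funext a b
        exact cell_unique (h a b).1 (h a b).2 (h0 a b).1 (h0 a b).2
    -- the sum vanishes off K
    have hvanish : ∀ X : Mat d n, X ∉ K → G X = 0 := by
      intro X hX
      simp only [hGdef]
      apply Finset.sum_eq_zero
      intro κ _
      rw [if_neg]
      intro h
      apply hX
      intro i j
      have h1 := (h i j).1
      have h2 := (h i j).2
      have hcast : ((κ i j : ℕ) : ℝ) + 1 ≤ (N:ℝ) := by exact_mod_cast (κ i j).2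
      have hNδ : (N:ℝ) * (N:ℝ)⁻¹ = 1 := mul_inv_cancel₀ hNR.ne'
      have hδnn : (0:ℝ) ≤ (N:ℝ)⁻¹ := le_of_lt hδpos
      constructor
      · have : (0:ℝ) ≤ ((κ i j : ℕ) : ℝ) * (N:ℝ)⁻¹ := by positivity
        linarith
      · nlinarith
    -- measurability and volume of K
    have hmeasK : MeasurableSet K := by
      rw [hKeq]
      exact MeasurableSet.univ_pi fun i =>
        MeasurableSet.univ_pi fun j => measurableSet_Icc
    have hvolK : volume K = 1 := by
      have h1 : (volume : Measure (Fin n → ℝ))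
          (Set.pi Set.univ fun _ : Fin n => Set.Icc (0:ℝ) 1) = 1 := by
        rw [volume_pi_pi]
        simp [Real.volume_Icc]
      rw [hKeq]
      show (volume : Measure (∀ _ : Fin d, Fin n → ℝ))
        (Set.pi Set.univ fun i => Set.pi Set.univ fun x : Fin n => Set.Icc (0:ℝ) 1) = 1
      rw [volume_pi_pi]
      exact Finset.prod_eq_one fun i _ => h1
    -- a.e. the coordinates avoid 1
    have hae1 : ∀ᵐ X : Mat d n, ∀ i j, X i j ≠ 1 := by
      refine ae_all_iff.2 fun i => ae_all_iff.2 fun j => ?_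
      have h1 : (volume : Measure (Fin n → ℝ)) {g | g j = 1} = 0 := by
        rw [volume_pi]
        exact Measure.pi_hyperplane _ j 1
      have h2 : (volume : Measure (Mat d n)) {X : Mat d n | X i j = 1} = 0 := by
        have heq : {X : Mat d n | X i j = 1}
            = Function.eval i ⁻¹' {g : Fin n → ℝ | g j = 1} := rfl
        rw [heq]
        show (Measure.pi fun _ : Fin d => (volume : Measure (Fin n → ℝ))) (Function.eval i ⁻¹' {g : Fin n → ℝ | g j = 1}) = 0
        exact Measure.pi_eval_preimage_null _ h1
      rw [ae_iff]
      convert h2 using 2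
      simp
    set B : ENNReal := ENNReal.ofReal (((d:ℝ) * n) * η ^ p) with hBdef
    -- pointwise a.e. bound
    have hbound : ∀ᵐ X : Mat d n,
        ENNReal.ofReal (∑ i, ∑ j, |f X i j - G X i j| ^ p)
          ≤ K.indicator (fun _ => B) X := by
      filter_upwards [hae1] with X hX
      by_cases hXK : X ∈ K
      · rw [Set.indicator_of_mem hXK]
        have hcoord : ∀ i j, 0 ≤ X i j ∧ X i j < 1 := fun i j =>
          ⟨(hXK i j).1, lt_of_le_of_ne (hXK i j).2 (hX i j)⟩
        choose κfun hκ1 hκ2 using fun i j =>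
          cell_exists hNpos (hcoord i j).1 (hcoord i j).2
        have hGX : G X = f (Matrix.of fun i j =>
            ((κfun i j : ℕ) : ℝ) * ((N:ℝ)⁻¹) + (N:ℝ)⁻¹ / 2) :=
          hcollapse X κfun fun i j => ⟨hκ1 i j, hκ2 i j⟩
        -- distance to the center
        set Y : Fin d → Fin n → ℝ := X with hYdef
        set CF : Fin d → Fin n → ℝ := Matrix.of fun i j =>
            ((κfun i j : ℕ) : ℝ) * ((N:ℝ)⁻¹) + (N:ℝ)⁻¹ / 2 with hCFdef
        have hdY : dist Y CF ≤ δ / 2 := by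
          rw [dist_pi_le_iff (by positivity)]
          intro i
          rw [dist_pi_le_iff (by positivity)]
          intro j
          rw [Real.dist_eq]
          have hCv : CF i j = ((κfun i j : ℕ) : ℝ) * ((N:ℝ)⁻¹) + (N:ℝ)⁻¹ / 2 := rfl
          rw [hCv]
          have h1 := hκ1 i j
          have h2 := hκ2 i j
          rw [abs_le]
          constructor <;> [skip; skip] <;>
            simp only [hYdef] <;> [linarith; linarith]
        have hdist : dist Y CF < ρ := lt_of_le_of_lt hdY (by linarith)
        have hfd : dist (F Y) (F CF) < η := himp hdist
        apply ENNReal.ofReal_le_ofReal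
        rw [hGX]
        calc ∑ i, ∑ j, |f X i j - f (Matrix.of fun i j =>
                ((κfun i j : ℕ) : ℝ) * ((N:ℝ)⁻¹) + (N:ℝ)⁻¹ / 2) i j| ^ p
            ≤ ∑ i : Fin d, ∑ j : Fin n, η ^ p := by
              apply Finset.sum_le_sum
              intro i _
              apply Finset.sum_le_sum
              intro j _
              apply Real.rpow_le_rpow (abs_nonneg _) ?_ (by linarith : (0:ℝ) ≤ p)
              calc |f X i j - f (Matrix.of fun i j =>
                    ((κfun i j : ℕ) : ℝ) * ((N:ℝ)⁻¹) + (N:ℝ)⁻¹ / 2) i j|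
                  = dist (F Y i j) (F CF i j) := by rw [Real.dist_eq]
                _ ≤ dist (F Y i) (F CF i) := dist_le_pi_dist _ _ j
                _ ≤ dist (F Y) (F CF) := dist_le_pi_dist _ _ i
                _ ≤ η := le_of_lt hfd
          _ = ((d:ℝ) * n) * η ^ p := by
              simp [Finset.sum_const, Finset.card_univ, nsmul_eq_mul]
              ring
      · rw [Set.indicator_of_notMem hXK]
        have h0 : f X = 0 := hzero X hXK
        have hG0 : G X = 0 := hvanish X hXK
        have hterm : ∀ i j, |f X i j - G X i j| ^ p = 0 := by
          intro i j
          rw [h0, hG0]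
          simp [Real.zero_rpow (by linarith : p ≠ 0)]
        simp [hterm]
    -- integrate
    have hBε : ((d:ℝ) * n) * η ^ p ≤ ε ^ p := by
      have hdnp : (0:ℝ) < ((d:ℝ) * n) ^ p := Real.rpow_pos_of_pos hdnpos p
      have hxp : ((d:ℝ) * n) ≤ ((d:ℝ) * n) ^ p := by
        calc ((d:ℝ) * n) = ((d:ℝ) * n) ^ (1:ℝ) := (Real.rpow_one _).symm
          _ ≤ ((d:ℝ) * n) ^ p := Real.rpow_le_rpow_of_exponent_le hdn hp
      have hfrac : ((d:ℝ) * n) * (((d:ℝ) * n) ^ p)⁻¹ ≤ 1 := by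
        rw [← div_eq_mul_inv]
        exact div_le_one_of_le₀ hxp (le_of_lt hdnp)
      calc ((d:ℝ) * n) * η ^ p
          = (((d:ℝ) * n) * (((d:ℝ) * n) ^ p)⁻¹) * ε ^ p := by
            rw [hηdef, Real.div_rpow hε.le (le_of_lt hdnpos)]
            ring
        _ ≤ 1 * ε ^ p := by
            apply mul_le_mul_of_nonneg_right hfrac (Real.rpow_nonneg hε.le p)
        _ = ε ^ p := one_mul _
    have hI : (∫⁻ X : Mat d n, ENNReal.ofReal (∑ i, ∑ j, |f X i j - G X i j| ^ p))
        ≤ ENNReal.ofReal (ε ^ p) := by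
      calc (∫⁻ X : Mat d n, ENNReal.ofReal (∑ i, ∑ j, |f X i j - G X i j| ^ p))
          ≤ ∫⁻ X : Mat d n, K.indicator (fun _ => B) X := lintegral_mono_ae hbound
        _ = B * volume K := lintegral_indicator_const hmeasK B
        _ = B := by rw [hvolK, mul_one]
        _ ≤ ENNReal.ofReal (ε ^ p) := ENNReal.ofReal_le_ofReal hBε
    have hppos : (0:ℝ) < p := lt_of_lt_of_le one_pos hp
    calc lpDist p f G
        = (∫⁻ X : Mat d n, ENNReal.ofReal (∑ i, ∑ j, |f X i j - G X i j| ^ p)) ^ (1/p) := rfl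
      _ ≤ (ENNReal.ofReal (ε ^ p)) ^ (1/p) :=
          ENNReal.rpow_le_rpow hI (by positivity)
      _ = ENNReal.ofReal ε := by
          rw [ENNReal.ofReal_rpow_of_pos (Real.rpow_pos_of_pos hε p), one_div,
            Real.rpow_rpow_inv hε.le (ne_of_gt hppos)]
end
end

section
/- Let d, n ≥ 1 and δ ∈ (0,1) with 1/δ ∈ ℕ. Define the scalar quantization map g_q^ent : ℝ → {−δ^{−nd}, 0, δ, …, 1−δ} by g_q^ent(t) = kδ if kδ ≤ t < (k+1)δ for some k ∈ {0, 1, …, 1/δ − 1}, and g_q^ent(t) = −δ^{−nd} otherwise. Then there exists a function g_q : ℝ^{d×n} → G_δ^+ that is a composition of d/δ + d token-wise feed-forward layers with r = 1 hidden node and activations in Φ, and that applies g_q^ent to every entry of its input, i.e., g_q(X)_{i,j} = g_q^ent(X_{i,j}) for all i, j. -/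
open MeasureTheory Matrix Filter
open scoped Classical

noncomputable section

/-- Token-wise feed-forward layer with skip connection, hidden size `r` and
entrywise activation `act`:  `Y ↦ Y + W₂ · act(W₁ Y + b₁ 1ₙᵀ) + b₂ 1ₙᵀ`. -/
def ffL {d n : ℕ} (r : ℕ) (W1 : Matrix (Fin r) (Fin d) ℝ) (W2 : Matrix (Fin d) (Fin r) ℝ)
    (b1 : Fin r → ℝ) (b2 : Fin d → ℝ) (act : ℝ → ℝ) (Y : Mat d n) : Mat d n :=
  Y + W2 * (W1 * Y + Matrix.of fun i _ => b1 i).map act + Matrix.of fun i _ => b2 i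
/-- The class `Φ` of piecewise linear functions `ℝ → ℝ` with at most three pieces,
at least one of which is constant. -/
def InPhi (φ : ℝ → ℝ) : Prop :=
  ∃ c₁ c₂ a₁ β₁ a₂ β₂ a₃ β₃ : ℝ, c₁ ≤ c₂ ∧ (a₁ = 0 ∨ a₂ = 0 ∨ a₃ = 0) ∧
    ∀ t, φ t = if t < c₁ then a₁ * t + β₁ else if t < c₂ then a₂ * t + β₂ else a₃ * t + β₃
/-- A token-wise feed-forward layer with `r` hidden nodes and activation in `Φ`. -/
def IsFFLayer (d n r : ℕ) (f : Mat d n → Mat d n) : Prop :=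
  ∃ W1 W2 b1 b2 φ, InPhi φ ∧ f = fun Y : Mat d n => ffL r W1 W2 b1 b2 φ Y


/-- quantization activation for level `c = k·δ`. -/
def phiQ (c δ : ℝ) : ℝ → ℝ := fun t =>
  if t < c then 0 * t + 0 else if t < c + δ then (-1) * t + c else 0 * t + 0

/-- final activation sending everything outside `[0, 1-δ/2)` to `-M`. -/
def phiF (δ M : ℝ) : ℝ → ℝ := fun t =>
  if t < 0 then (-1) * t + (-M) else if t < 1 - δ / 2 then 0 * t + 0 else (-1) * t + (-M)

lemma inPhi_phiQ (c δ : ℝ) (hδ : 0 < δ) : InPhi (phiQ c δ) :=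
  ⟨c, c + δ, 0, 0, -1, c, 0, 0, by linarith, Or.inl rfl, fun t => rfl⟩

lemma inPhi_phiF (δ M : ℝ) (h0 : 0 < δ) (h1 : δ < 1) : InPhi (phiF δ M) :=
  ⟨0, 1 - δ / 2, -1, -M, 0, 0, -1, -M, by linarith, Or.inr (Or.inl rfl), fun t => rfl⟩

/-- a layer acting only on row `i`, adding `φ` of the entry to each entry of row `i`. -/
def rowLayer (d n : ℕ) (i : Fin d) (φ : ℝ → ℝ) : Mat d n → Mat d n :=
  ffL 1 (Matrix.of fun _ m => if m = i then (1:ℝ) else 0)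
        (Matrix.of fun i' _ => if i' = i then (1:ℝ) else 0) 0 0 φ

lemma rowLayer_isFF {d n : ℕ} (i : Fin d) (φ : ℝ → ℝ) (h : InPhi φ) :
    IsFFLayer d n 1 (rowLayer d n i φ) :=
  ⟨_, _, _, _, φ, h, rfl⟩

lemma rowLayer_apply {d n : ℕ} (i : Fin d) (φ : ℝ → ℝ) (Y : Mat d n) (i' : Fin d) (j : Fin n) :
    rowLayer d n i φ Y i' j = Y i' j + (if i' = i then φ (Y i j) else 0) := by
  simp [rowLayer, ffL, Matrix.add_apply, Matrix.mul_apply, Fin.sum_univ_one,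
    Matrix.map_apply, Finset.sum_ite_eq, ite_mul, mul_ite]

lemma foldl_comp {α : Type*} (l : List (α → α)) (g : α → α) (x : α) :
    (l.foldl (fun acc b => b ∘ acc) g) x = l.foldl (fun x f => f x) (g x) := by
  induction l generalizing g x with
  | nil => rfl
  | cons f l ih => simpa using ih (f ∘ g) x

/-- one scalar step. -/
def sstep (φ : ℝ → ℝ) (t : ℝ) : ℝ := t + φ t

lemma block_apply {d n : ℕ} (i : Fin d) (ψs : List (ℝ → ℝ)) (Y : Mat d n)
    (i' : Fin d) (j : Fin n) :
    ((ψs.map (rowLayer d n i)).foldl (fun x f => f x) Y) i' j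
      = if i' = i then ψs.foldl (fun t ψ => sstep ψ t) (Y i j) else Y i' j := by
  induction ψs generalizing Y with
  | nil => by_cases h : i' = i <;> simp [h]
  | cons ψ ψs ih =>
    simp only [List.map_cons, List.foldl_cons]
    rw [ih]
    by_cases h : i' = i <;> simp [h, rowLayer_apply, sstep]

lemma rows_apply {d n : ℕ} (ψs : List (ℝ → ℝ)) (R : List (Fin d)) (hR : R.Nodup)
    (Y : Mat d n) (i' : Fin d) (j : Fin n) :
    ((R.flatMap (fun i => ψs.map (rowLayer d n i))).foldl (fun x f => f x) Y) i' j
      = if i' ∈ R then ψs.foldl (fun t ψ => sstep ψ t) (Y i' j) else Y i' j := by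
  induction R generalizing Y with
  | nil => simp
  | cons i R ih =>
    obtain ⟨hi, hR'⟩ := List.nodup_cons.mp hR
    simp only [List.flatMap_cons, List.foldl_append]
    rw [ih hR']
    by_cases hmem : i' ∈ R
    · have hne : i' ≠ i := fun h => hi (h ▸ hmem)
      simp [hmem, hne, block_apply]
    · by_cases he : i' = i
      · subst he; simp [hmem, block_apply]
      · simp [hmem, he, block_apply]

lemma sstep_phiQ (c δ u : ℝ) :
    sstep (phiQ c δ) u = if u < c then u else if u < c + δ then c else u := by
  simp only [sstep, phiQ]; split_ifs <;> ring

lemma sstep_phiF (δ M u : ℝ) :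
    sstep (phiF δ M) u = if u < 0 then -M else if u < 1 - δ / 2 then u else -M := by
  simp only [sstep, phiF]; split_ifs <;> ring

lemma quant_fold (δ : ℝ) (hδ : 0 < δ) (m : ℕ) (t : ℝ) :
    ((List.range m).map (fun k : ℕ => phiQ ((k:ℝ) * δ) δ)).foldl (fun t ψ => sstep ψ t) t
      = if 0 ≤ t ∧ t < (m:ℝ) * δ then δ * (⌊t / δ⌋ : ℝ) else t := by
  induction m with
  | zero =>
    simp only [List.range_zero, List.map_nil, List.foldl_nil, Nat.cast_zero, zero_mul]
    rw [if_neg]; rintro ⟨h1, h2⟩; linarith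
  | succ m ih =>
    rw [List.range_succ, List.map_append, List.foldl_append, ih]
    simp only [List.map_cons, List.map_nil, List.foldl_cons, List.foldl_nil, sstep_phiQ]
    push_cast
    by_cases h : 0 ≤ t ∧ t < (m:ℝ) * δ
    · have hfl : (⌊t / δ⌋ : ℝ) ≤ t / δ := Int.floor_le _
      have h1 : δ * (⌊t / δ⌋ : ℝ) ≤ t := by
        calc δ * (⌊t / δ⌋ : ℝ) ≤ δ * (t / δ) := by nlinarith
        _ = t := by field_simp
      have h2 : δ * (⌊t / δ⌋ : ℝ) < (m:ℝ) * δ := lt_of_le_of_lt h1 h.2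
      rw [if_pos h, if_pos h2, if_pos ⟨h.1, by nlinarith [h.2]⟩]
    · rw [if_neg h]
      by_cases ht0 : 0 ≤ t
      · have hge : (m:ℝ) * δ ≤ t := by
          by_contra hc; exact h ⟨ht0, lt_of_not_ge hc⟩
        rw [if_neg (not_lt.mpr hge)]
        by_cases ht1 : t < (m:ℝ) * δ + δ
        · rw [if_pos ht1, if_pos ⟨ht0, by nlinarith⟩]
          have hfloor : ⌊t / δ⌋ = (m : ℤ) := by
            rw [Int.floor_eq_iff]
            constructor
            · rw [le_div_iff₀ hδ]; push_cast; linarith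
            · rw [div_lt_iff₀ hδ]; push_cast; nlinarith
          rw [hfloor]; push_cast; ring
        · rw [if_neg ht1, if_neg (by rintro ⟨-, h2⟩; nlinarith [not_lt.mp ht1])]
      · have ht0' : t < 0 := lt_of_not_ge ht0
        rw [if_pos (by nlinarith [Nat.cast_nonneg (α := ℝ) m]), if_neg (by rintro ⟨h1,-⟩; exact ht0 h1)]


/-- **Lemma 5 (quantization)**: with `δ = 1/N`, there is a composition of `d/δ + d`
token-wise feed-forward layers with `r = 1` and activations in `Φ` that applies the
scalar quantization map `g_q^ent` (sending `t ∈ [kδ, (k+1)δ)`, `0 ≤ k < 1/δ`, to `kδ`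
and everything else to `−δ^{−nd}`) to every entry of its input. -/
theorem stmt_7 (d n N : ℕ) (hd : 1 ≤ d) (hn : 1 ≤ n) (δ : ℝ)
    (hδ0 : 0 < δ) (hδ1 : δ < 1) (hδN : δ * N = 1) :
    ∃ layers : List (Mat d n → Mat d n),
      layers.length = d * N + d ∧
      (∀ f ∈ layers, IsFFLayer d n 1 f) ∧
      (∀ (X : Mat d n) (i : Fin d) (j : Fin n),
        layers.foldl (fun acc b => b ∘ acc) id X i j =
          if ∃ k : ℕ, k < N ∧ (k : ℝ) * δ ≤ X i j ∧ X i j < ((k : ℝ) + 1) * δ then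
            δ * (⌊X i j / δ⌋ : ℝ)
          else -((δ ^ (n * d))⁻¹)) := by
  set M : ℝ := (δ ^ (n * d))⁻¹ with hM
  set ψs : List (ℝ → ℝ) :=
    ((List.range N).map (fun k : ℕ => phiQ ((k:ℝ) * δ) δ)) ++ [phiF δ M] with hψs
  have hNδ : (N:ℝ) * δ = 1 := by rw [mul_comm]; exact hδN
  refine ⟨(List.finRange d).flatMap (fun i => ψs.map (rowLayer d n i)), ?_, ?_, ?_⟩
  · simp [hψs, List.length_flatMap, Function.comp_def]
    ring
  · intro f hf
    simp only [List.mem_flatMap, List.mem_map] at hf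
    obtain ⟨i, -, ψ, hψ, rfl⟩ := hf
    refine rowLayer_isFF i ψ ?_
    rcases List.mem_append.mp hψ with h | h
    · obtain ⟨k, -, rfl⟩ := List.mem_map.mp h
      exact inPhi_phiQ _ _ hδ0
    · simp only [List.mem_singleton] at h
      subst h
      exact inPhi_phiF _ _ hδ0 hδ1
  · intro X i j
    rw [foldl_comp]
    rw [rows_apply ψs (List.finRange d) (List.nodup_finRange d)]
    simp only [List.mem_finRange, if_true, id_eq]
    set t := X i j with ht
    rw [hψs, List.foldl_append]
    simp only [List.foldl_cons, List.foldl_nil]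
    rw [quant_fold δ hδ0 N t, sstep_phiF]
    have hequiv : (∃ k : ℕ, k < N ∧ (k:ℝ) * δ ≤ t ∧ t < ((k:ℝ) + 1) * δ)
        ↔ (0 ≤ t ∧ t < 1) := by
      constructor
      · rintro ⟨k, hk, h1, h2⟩
        have hk' : (k:ℝ) + 1 ≤ (N:ℝ) := by exact_mod_cast hk
        have : ((k:ℝ) + 1) * δ ≤ (N:ℝ) * δ := by nlinarith
        exact ⟨le_trans (by positivity) h1, by linarith [hNδ ▸ this]⟩
      · rintro ⟨h0, h1⟩
        have hf0 : 0 ≤ ⌊t / δ⌋ := Int.floor_nonneg.mpr (by positivity)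
        have hflt : ⌊t / δ⌋ < (N:ℤ) := by
          rw [Int.floor_lt]; push_cast; rw [div_lt_iff₀ hδ0]; linarith
        refine ⟨⌊t / δ⌋.toNat, ?_, ?_, ?_⟩
        · omega
        · have : ((⌊t / δ⌋.toNat : ℤ) : ℝ) ≤ t / δ := by
            rw [Int.toNat_of_nonneg hf0]; exact Int.floor_le _
          push_cast at this ⊢
          rw [← le_div_iff₀ hδ0] at *
          linarith
        · have : t / δ < ((⌊t / δ⌋.toNat : ℤ) : ℝ) + 1 := by
            rw [Int.toNat_of_nonneg hf0]; exact Int.lt_floor_add_one _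
          push_cast at this ⊢
          rw [div_lt_iff₀ hδ0] at this
          nlinarith
    by_cases hc : 0 ≤ t ∧ t < 1
    · have hf0 : (0:ℝ) ≤ (⌊t / δ⌋ : ℝ) := by
        exact_mod_cast Int.floor_nonneg.mpr (div_nonneg hc.1 hδ0.le)
      have hflt : ⌊t / δ⌋ < (N:ℤ) := by
        rw [Int.floor_lt]; push_cast; rw [div_lt_iff₀ hδ0]; linarith [hc.2]
      have hle : (⌊t / δ⌋ : ℝ) ≤ (N:ℝ) - 1 := by
        have h1 : ⌊t / δ⌋ + 1 ≤ (N:ℤ) := hflt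
        have h2 : ((⌊t / δ⌋ : ℤ) : ℝ) + 1 ≤ (N:ℝ) := by exact_mod_cast h1
        linarith
      have hu1 : δ * (⌊t / δ⌋ : ℝ) ≤ 1 - δ := by nlinarith
      have hq : (if 0 ≤ t ∧ t < (N:ℝ) * δ then δ * (⌊t / δ⌋ : ℝ) else t)
          = δ * (⌊t / δ⌋ : ℝ) := if_pos ⟨hc.1, by rw [hNδ]; exact hc.2⟩
      rw [hq, if_neg (not_lt.mpr (mul_nonneg hδ0.le hf0)),
        if_pos (show δ * (⌊t / δ⌋ : ℝ) < 1 - δ / 2 by nlinarith),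
        if_pos (hequiv.mpr hc)]
    · have hq : (if 0 ≤ t ∧ t < (N:ℝ) * δ then δ * (⌊t / δ⌋ : ℝ) else t) = t :=
        if_neg (by rw [hNδ]; exact hc)
      rw [hq, if_neg (fun h => hc (hequiv.mp h))]
      by_cases htn : t < 0
      · rw [if_pos htn]
      · have ht1 : 1 ≤ t := by
          by_contra hlt
          exact hc ⟨not_lt.mp htn, lt_of_not_ge hlt⟩
        rw [if_neg htn, if_neg (show ¬ t < 1 - δ / 2 by nlinarith)]
end
end

section
/- Let d ≥ 1, n ≥ 1, u ∈ ℝ^d, b ∈ ℝ, and e^{(1)} = (1, 0, …, 0)^T ∈ ℝ^d. Define ψ(Z; b) = e^{(1)} (u^T Z) σ_H[(u^T Z)^T (u^T Z − b 1_n^T)] ∈ ℝ^{d×n} for Z ∈ ℝ^{d×n}. Then all rows of ψ(Z; b) other than the first row are zero, and for every j ∈ {1, …, n}: if u^T Z_{:,j} > b then ψ(Z; b)_{1,j} = max_k u^T Z_{:,k}, and if u^T Z_{:,j} < b then ψ(Z; b)_{1,j} = min_k u^T Z_{:,k}. -/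
open MeasureTheory Matrix Filter
open scoped Classical

noncomputable section

/-- Column-wise hardmax operator: in each column, puts mass `1/k` on its `k` maximizing
entries and `0` elsewhere. -/
def hardmax {n : ℕ} (A : Matrix (Fin n) (Fin n) ℝ) : Matrix (Fin n) (Fin n) ℝ :=
  Matrix.of fun i j =>
    if (∀ k, A k j ≤ A i j) then
      ((Finset.univ.filter fun i' => ∀ k, A k j ≤ A i' j).card : ℝ)⁻¹
    else 0

lemma key_sup (n : ℕ) (hne : (Finset.univ : Finset (Fin n)).Nonempty) (f : Fin n → ℝ) :
    ∑ i ∈ (Finset.univ.filter fun i => ∀ k, f k ≤ f i),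
      f i * (((Finset.univ.filter fun i => ∀ k, f k ≤ f i)).card : ℝ)⁻¹
    = Finset.univ.sup' hne f := by
  set S := Finset.univ.filter fun i => ∀ k, f k ≤ f i with hS
  obtain ⟨i0, -, hi0⟩ := Finset.exists_max_image Finset.univ f hne
  have hSne : S.Nonempty := ⟨i0, by simp [hS, fun k => hi0 k (Finset.mem_univ k)]⟩
  have hM : ∀ i ∈ S, f i = Finset.univ.sup' hne f := by
    intro i hi
    rw [hS, Finset.mem_filter] at hi
    exact le_antisymm (Finset.le_sup' f (Finset.mem_univ i))
      ((Finset.sup'_le_iff hne f).mpr fun k _ => hi.2 k)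
  rw [Finset.sum_congr rfl fun i hi => by rw [hM i hi]]
  rw [Finset.sum_const, nsmul_eq_mul]
  have hc : (S.card : ℝ) ≠ 0 := by
    exact_mod_cast Finset.card_ne_zero_of_mem hSne.choose_spec
  field_simp

lemma key_inf (n : ℕ) (hne : (Finset.univ : Finset (Fin n)).Nonempty) (f : Fin n → ℝ) :
    ∑ i ∈ (Finset.univ.filter fun i => ∀ k, f i ≤ f k),
      f i * (((Finset.univ.filter fun i => ∀ k, f i ≤ f k)).card : ℝ)⁻¹
    = Finset.univ.inf' hne f := by
  set S := Finset.univ.filter fun i => ∀ k, f i ≤ f k with hS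
  obtain ⟨i0, -, hi0⟩ := Finset.exists_min_image Finset.univ f hne
  have hSne : S.Nonempty := ⟨i0, by simp [hS, fun k => hi0 k (Finset.mem_univ k)]⟩
  have hM : ∀ i ∈ S, f i = Finset.univ.inf' hne f := by
    intro i hi
    rw [hS, Finset.mem_filter] at hi
    exact le_antisymm ((Finset.le_inf'_iff hne f).mpr fun k _ => hi.2 k)
      (Finset.inf'_le f (Finset.mem_univ i))
  rw [Finset.sum_congr rfl fun i hi => by rw [hM i hi]]
  rw [Finset.sum_const, nsmul_eq_mul]
  have hc : (S.card : ℝ) ≠ 0 := by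
    exact_mod_cast Finset.card_ne_zero_of_mem hSne.choose_spec
  field_simp

/-- Properties of `ψ(Z; b) = e⁽¹⁾ (uᵀZ) σ_H[(uᵀZ)ᵀ(uᵀZ − b·1ₙᵀ)]`: all rows but the
first vanish; on the first row, entries `j` with `uᵀZ_{:,j} > b` equal `max_k uᵀZ_{:,k}`
and entries with `uᵀZ_{:,j} < b` equal `min_k uᵀZ_{:,k}`. -/
theorem stmt_11 (d n : ℕ) (hd : 1 ≤ d) (hn : 1 ≤ n) (u : Fin d → ℝ) (b : ℝ)
    (Z : Mat d n) :
    let r : Fin n → ℝ := fun j => ∑ i, u i * Z i j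
    let e1 : Fin d → ℝ := fun i => if (i : ℕ) = 0 then 1 else 0
    let psi : Mat d n :=
      Matrix.vecMulVec e1 r * hardmax (Matrix.of fun j j' : Fin n => r j * (r j' - b))
    (∀ (i : Fin d) (j : Fin n), (i : ℕ) ≠ 0 → psi i j = 0) ∧
    (∀ (i : Fin d) (j : Fin n), (i : ℕ) = 0 → b < r j →
      psi i j = Finset.univ.sup' (Finset.univ_nonempty_iff.mpr ⟨⟨0, hn⟩⟩) r) ∧
    (∀ (i : Fin d) (j : Fin n), (i : ℕ) = 0 → r j < b →
      psi i j = Finset.univ.inf' (Finset.univ_nonempty_iff.mpr ⟨⟨0, hn⟩⟩) r) := by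
  intro r e1 psi
  have hpsi : ∀ (i : Fin d) (j : Fin n), psi i j =
      ∑ k, e1 i * r k *
        hardmax (Matrix.of fun j j' : Fin n => r j * (r j' - b)) k j := by
    intro i j
    simp [psi, Matrix.mul_apply, Matrix.vecMulVec_apply]
  have hne : (Finset.univ : Finset (Fin n)).Nonempty :=
    Finset.univ_nonempty_iff.mpr ⟨⟨0, hn⟩⟩
  refine ⟨?_, ?_, ?_⟩
  · intro i j hi
    rw [hpsi]
    apply Finset.sum_eq_zero
    intro k _
    simp [e1, hi]
  · intro i j hi hbj
    rw [hpsi]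
    have hpos : 0 < r j - b := sub_pos.mpr hbj
    have hcond : ∀ k : Fin n,
        (∀ k' : Fin n, r k' * (r j - b) ≤ r k * (r j - b)) ↔ ∀ k', r k' ≤ r k := by
      intro k
      constructor
      · intro h k'; exact le_of_mul_le_mul_right (h k') hpos
      · intro h k'; exact mul_le_mul_of_nonneg_right (h k') hpos.le
    set P : Fin n → Prop := fun k => ∀ k', r k' ≤ r k with hP
    calc ∑ k, e1 i * r k *
            hardmax (Matrix.of fun j j' : Fin n => r j * (r j' - b)) k j
        = ∑ k ∈ (Finset.univ.filter P),
            r k * (((Finset.univ.filter P)).card : ℝ)⁻¹ := by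
          rw [Finset.sum_filter]
          apply Finset.sum_congr rfl
          intro k _
          simp only [hardmax, Matrix.of_apply, e1, hi, if_true, one_mul]
          change r k * (if (∀ k' : Fin n, r k' * (r j - b) ≤ r k * (r j - b)) then
            ((Finset.univ.filter fun i' : Fin n =>
              ∀ k'' : Fin n, r k'' * (r j - b) ≤ r i' * (r j - b)).card : ℝ)⁻¹ else 0) =
            if P k then r k * (((Finset.univ.filter P)).card : ℝ)⁻¹ else 0
          by_cases h : P k
          · have hfe : (Finset.univ.filter fun i' : Fin n =>
                ∀ k'' : Fin n, r k'' * (r j - b) ≤ r i' * (r j - b)) =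
                Finset.univ.filter P :=
              Finset.filter_congr fun k' _ => by simp [hcond k', hP]
            simp only [if_pos ((hcond k).mpr h), if_pos h, hfe]
          · rw [if_neg ((fun hh => h ((hcond k).mp hh)) :
              ¬ (∀ k' : Fin n, r k' * (r j - b) ≤ r k * (r j - b))), if_neg h, mul_zero]
      _ = Finset.univ.sup' hne r := key_sup n hne r
      _ = _ := by congr 1
  · intro i j hi hbj
    rw [hpsi]
    have hneg : r j - b < 0 := sub_neg.mpr hbj
    have hcond : ∀ k : Fin n,
        (∀ k' : Fin n, r k' * (r j - b) ≤ r k * (r j - b)) ↔ ∀ k', r k ≤ r k' := by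
      intro k
      constructor
      · intro h k'; nlinarith [h k', hneg]
      · intro h k'; exact mul_le_mul_of_nonpos_right (h k') hneg.le
    set P : Fin n → Prop := fun k => ∀ k', r k ≤ r k' with hP
    calc ∑ k, e1 i * r k *
            hardmax (Matrix.of fun j j' : Fin n => r j * (r j' - b)) k j
        = ∑ k ∈ (Finset.univ.filter P),
            r k * (((Finset.univ.filter P)).card : ℝ)⁻¹ := by
          rw [Finset.sum_filter]
          apply Finset.sum_congr rfl
          intro k _
          simp only [hardmax, Matrix.of_apply, e1, hi, if_true, one_mul]
          change r k * (if (∀ k' : Fin n, r k' * (r j - b) ≤ r k * (r j - b)) then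
            ((Finset.univ.filter fun i' : Fin n =>
              ∀ k'' : Fin n, r k'' * (r j - b) ≤ r i' * (r j - b)).card : ℝ)⁻¹ else 0) =
            if P k then r k * (((Finset.univ.filter P)).card : ℝ)⁻¹ else 0
          by_cases h : P k
          · have hfe : (Finset.univ.filter fun i' : Fin n =>
                ∀ k'' : Fin n, r k'' * (r j - b) ≤ r i' * (r j - b)) =
                Finset.univ.filter P :=
              Finset.filter_congr fun k' _ => by simp [hcond k', hP]
            simp only [if_pos ((hcond k).mpr h), if_pos h, hfe]
          · rw [if_neg ((fun hh => h ((hcond k).mp hh)) :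
              ¬ (∀ k' : Fin n, r k' * (r j - b) ≤ r k * (r j - b))), if_neg h, mul_zero]
      _ = Finset.univ.inf' hne r := key_inf n hne r
      _ = _ := by congr 1
end
end

section
/- Let d ≥ 1, n ≥ 1, u ∈ ℝ^d, and b < b' in ℝ. Define Ψ(Z; b, b') = ψ(Z; b) − ψ(Z; b'), where ψ(Z; c) = e^{(1)} (u^T Z) σ_H[(u^T Z)^T (u^T Z − c 1_n^T)]. Then all rows of Ψ(Z; b, b') other than the first row are zero, and for every j ∈ {1, …, n}: if b < u^T Z_{:,j} < b' then Ψ(Z; b, b')_{1,j} = max_k u^T Z_{:,k} − min_k u^T Z_{:,k}, and if u^T Z_{:,j} < b or u^T Z_{:,j} > b' then Ψ(Z; b, b')_{1,j} = 0. -/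
open MeasureTheory Matrix Filter
open scoped Classical

noncomputable section

lemma keySup {n : ℕ} (hne : (Finset.univ : Finset (Fin n)).Nonempty) (r : Fin n → ℝ) :
    ∑ k, r k * (if (∀ k', r k' ≤ r k) then
      ((Finset.univ.filter fun i' => ∀ k', r k' ≤ r i').card : ℝ)⁻¹ else 0)
      = Finset.univ.sup' hne r := by
  set S := Finset.univ.filter fun i' : Fin n => ∀ k', r k' ≤ r i' with hS
  obtain ⟨m, _, hm⟩ := Finset.exists_max_image Finset.univ r hne
  have hmS : m ∈ S := Finset.mem_filter.mpr ⟨Finset.mem_univ _, fun k' => hm k' (Finset.mem_univ _)⟩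
  have hcard : (S.card : ℝ) ≠ 0 := by
    exact_mod_cast Finset.card_pos.mpr ⟨m, hmS⟩ |>.ne'
  have hval : ∀ k ∈ S, r k = Finset.univ.sup' hne r := fun k hk =>
    le_antisymm (Finset.le_sup' r (Finset.mem_univ k))
      (Finset.sup'_le _ _ fun c _ => (Finset.mem_filter.mp hk).2 c)
  have : ∑ k, r k * (if (∀ k', r k' ≤ r k) then ((S.card : ℝ))⁻¹ else 0)
      = ∑ k ∈ S, r k * ((S.card : ℝ))⁻¹ := by
    rw [Finset.sum_filter]
    exact Finset.sum_congr rfl fun k _ => by rw [mul_ite, mul_zero]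
  rw [this, Finset.sum_congr rfl (fun k hk => by rw [hval k hk]), Finset.sum_const,
    nsmul_eq_mul, mul_comm, mul_assoc, inv_mul_cancel₀ hcard, mul_one]

lemma keyInf {n : ℕ} (hne : (Finset.univ : Finset (Fin n)).Nonempty) (r : Fin n → ℝ) :
    ∑ k, r k * (if (∀ k', r k ≤ r k') then
      ((Finset.univ.filter fun i' => ∀ k', r i' ≤ r k').card : ℝ)⁻¹ else 0)
      = Finset.univ.inf' hne r := by
  set S := Finset.univ.filter fun i' : Fin n => ∀ k', r i' ≤ r k' with hS
  obtain ⟨m, _, hm⟩ := Finset.exists_min_image Finset.univ r hne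
  have hmS : m ∈ S := Finset.mem_filter.mpr ⟨Finset.mem_univ _, fun k' => hm k' (Finset.mem_univ _)⟩
  have hcard : (S.card : ℝ) ≠ 0 := by
    exact_mod_cast Finset.card_pos.mpr ⟨m, hmS⟩ |>.ne'
  have hval : ∀ k ∈ S, r k = Finset.univ.inf' hne r := fun k hk =>
    le_antisymm (Finset.le_inf' _ _ fun c _ => (Finset.mem_filter.mp hk).2 c)
      (Finset.inf'_le r (Finset.mem_univ k))
  have : ∑ k, r k * (if (∀ k', r k ≤ r k') then ((S.card : ℝ))⁻¹ else 0)
      = ∑ k ∈ S, r k * ((S.card : ℝ))⁻¹ := by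
    rw [Finset.sum_filter]
    exact Finset.sum_congr rfl fun k _ => by rw [mul_ite, mul_zero]
  rw [this, Finset.sum_congr rfl (fun k hk => by rw [hval k hk]), Finset.sum_const,
    nsmul_eq_mul, mul_comm, mul_assoc, inv_mul_cancel₀ hcard, mul_one]

lemma keyPos {n : ℕ} (hne : (Finset.univ : Finset (Fin n)).Nonempty) (r : Fin n → ℝ)
    {t : ℝ} (ht : 0 < t) :
    ∑ k, r k * (if (∀ k', r k' * t ≤ r k * t) then
      ((Finset.univ.filter fun i' => ∀ k', r k' * t ≤ r i' * t).card : ℝ)⁻¹ else 0)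
      = Finset.univ.sup' hne r := by
  simp only [mul_le_mul_iff_of_pos_right ht]
  exact keySup hne r

lemma keyNeg {n : ℕ} (hne : (Finset.univ : Finset (Fin n)).Nonempty) (r : Fin n → ℝ)
    {t : ℝ} (ht : t < 0) :
    ∑ k, r k * (if (∀ k', r k' * t ≤ r k * t) then
      ((Finset.univ.filter fun i' => ∀ k', r k' * t ≤ r i' * t).card : ℝ)⁻¹ else 0)
      = Finset.univ.inf' hne r := by
  simp only [mul_le_mul_right_of_neg ht]
  exact keyInf hne r

/-- Properties of the selective shift operation
`Ψ(Z; b, b') = ψ(Z; b) − ψ(Z; b')` with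
`ψ(Z; c) = e⁽¹⁾ (uᵀZ) σ_H[(uᵀZ)ᵀ(uᵀZ − c·1ₙᵀ)]`: all rows but the first vanish;
on the first row, entries `j` with `b < uᵀZ_{:,j} < b'` equal
`max_k uᵀZ_{:,k} − min_k uᵀZ_{:,k}` and entries with `uᵀZ_{:,j} < b` or
`uᵀZ_{:,j} > b'` equal `0`. -/
theorem stmt_12 (d n : ℕ) (hd : 1 ≤ d) (hn : 1 ≤ n) (u : Fin d → ℝ) (b b' : ℝ)
    (hb : b < b') (Z : Mat d n) :
    let r : Fin n → ℝ := fun j => ∑ i, u i * Z i j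
    let e1 : Fin d → ℝ := fun i => if (i : ℕ) = 0 then 1 else 0
    let psi : ℝ → Mat d n := fun c =>
      Matrix.vecMulVec e1 r * hardmax (Matrix.of fun j j' : Fin n => r j * (r j' - c))
    let Psi : Mat d n := psi b - psi b'
    (∀ (i : Fin d) (j : Fin n), (i : ℕ) ≠ 0 → Psi i j = 0) ∧
    (∀ (i : Fin d) (j : Fin n), (i : ℕ) = 0 → b < r j → r j < b' →
      Psi i j = Finset.univ.sup' (Finset.univ_nonempty_iff.mpr ⟨⟨0, hn⟩⟩) r
        - Finset.univ.inf' (Finset.univ_nonempty_iff.mpr ⟨⟨0, hn⟩⟩) r) ∧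
    (∀ (i : Fin d) (j : Fin n), (i : ℕ) = 0 → (r j < b ∨ b' < r j) →
      Psi i j = 0) := by
  intro r e1 psi Psi
  have hne : (Finset.univ : Finset (Fin n)).Nonempty :=
    Finset.univ_nonempty_iff.mpr ⟨⟨0, hn⟩⟩
  have hpsi : ∀ (c : ℝ) (i : Fin d) (j : Fin n), psi c i j =
      e1 i * ∑ k, r k * (if (∀ k', r k' * (r j - c) ≤ r k * (r j - c)) then
        ((Finset.univ.filter fun i' => ∀ k', r k' * (r j - c) ≤ r i' * (r j - c)).card : ℝ)⁻¹
        else 0) := by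
    intro c i j
    show ∑ k, Matrix.vecMulVec e1 r i k * hardmax _ k j = _
    rw [Finset.mul_sum]
    refine Finset.sum_congr rfl fun k _ => ?_
    rw [Matrix.vecMulVec_apply, mul_assoc]
    rfl
  have hPsi : ∀ (i : Fin d) (j : Fin n), Psi i j = psi b i j - psi b' i j := fun i j => rfl
  refine ⟨?_, ?_, ?_⟩
  · intro i j hi
    have he : e1 i = 0 := if_neg hi
    rw [hPsi, hpsi, hpsi, he, zero_mul, zero_mul, sub_zero]
  · intro i j hi h1 h2
    have he : e1 i = 1 := if_pos hi
    rw [hPsi, hpsi, hpsi, he, one_mul, one_mul,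
      keyPos hne r (sub_pos.mpr h1), keyNeg hne r (sub_neg.mpr h2)]
  · intro i j hi h
    have he : e1 i = 1 := if_pos hi
    rw [hPsi, hpsi, hpsi, he, one_mul, one_mul]
    rcases h with h | h
    · rw [keyNeg hne r (sub_neg.mpr h), keyNeg hne r (sub_neg.mpr (h.trans hb)), sub_self]
    · rw [keyPos hne r (sub_pos.mpr h), keyPos hne r (sub_pos.mpr (hb.trans h)), sub_self]
end
end

section
/- Let d ≥ 1, n ≥ 2, and δ ∈ (0,1) with 1/δ ∈ ℕ. Let l_1 < l_2 < … < l_n be elements of the grid {0, δ, 2δ, …, δ^{−d+1} − δ}, and for j ∈ {1, …, n} define l̃_j = l_j + Σ_{k=1}^{j−1} δ^{−kd}(l_{j−k} − l_{j−k+1}) + δ^{−jd}(l_n − l_1). Then l_n < l̃_1 < l̃_2 < … < l̃_n. -/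
noncomputable section

/-- For strictly increasing grid values `l_1 < … < l_n` in `{0, δ, …, δ^{−d+1} − δ}`
(with `δ = 1/N`), the shifted values
`l̃_j = l_j + Σ_{k=1}^{j−1} δ^{−kd}(l_{j−k} − l_{j−k+1}) + δ^{−jd}(l_n − l_1)`
satisfy `l_n < l̃_1 < l̃_2 < … < l̃_n`. -/
theorem stmt_13 (d n N : ℕ) (hd : 1 ≤ d) (hn : 2 ≤ n) (δ : ℝ)
    (hδ0 : 0 < δ) (hδ1 : δ < 1) (hδN : δ * N = 1)
    (l : ℕ → ℝ)
    (hmono : ∀ j j' : ℕ, 1 ≤ j → j < j' → j' ≤ n → l j < l j')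
    (hgrid : ∀ j : ℕ, 1 ≤ j → j ≤ n → ∃ k : ℕ, k < N ^ d ∧ l j = (k : ℝ) * δ) :
    let lt : ℕ → ℝ := fun j =>
      l j + (∑ k ∈ Finset.Icc 1 (j - 1), (δ ^ (k * d))⁻¹ * (l (j - k) - l (j - k + 1)))
        + (δ ^ (j * d))⁻¹ * (l n - l 1)
    l n < lt 1 ∧ ∀ j : ℕ, 2 ≤ j → j ≤ n → lt (j - 1) < lt j := by
  intro lt
  set b : ℝ := (δ ^ d)⁻¹ with hbdef
  have hδd0 : (0:ℝ) < δ ^ d := pow_pos hδ0 d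
  have hδd1 : δ ^ d < 1 := pow_lt_one₀ hδ0.le hδ1 (by omega)
  have hb1 : 1 < b := (one_lt_inv₀ hδd0).mpr hδd1
  have hNδ : (N:ℝ) = δ⁻¹ := eq_inv_of_mul_eq_one_right hδN
  have hbN : ((N:ℝ))^d = b := by rw [hNδ, hbdef, inv_pow]
  have hck : ∀ k : ℕ, (δ ^ (k * d))⁻¹ = b ^ k := by
    intro k; rw [hbdef, pow_mul', ← inv_pow]
  -- bounds on l
  have hM : ∀ j, 1 ≤ j → j ≤ n → 0 ≤ l j ∧ l j ≤ (b - 1) * δ := by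
    intro j h1 h2
    obtain ⟨k, hk, hlj⟩ := hgrid j h1 h2
    have hk' : (k:ℝ) + 1 ≤ (N:ℝ)^d := by
      have : (k:ℝ) + 1 ≤ ((N^d : ℕ) : ℝ) := by exact_mod_cast hk
      simpa using this
    rw [hbN] at hk'
    constructor
    · rw [hlj]; positivity
    · rw [hlj]; nlinarith [hδ0]
  -- gap between l 1 and l n
  have hgap : δ ≤ l n - l 1 := by
    have h1n : l 1 < l n := hmono 1 n le_rfl (by omega) le_rfl
    obtain ⟨k1, _, e1⟩ := hgrid 1 le_rfl (by omega)
    obtain ⟨kn, _, en⟩ := hgrid n (by omega) le_rfl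
    have hkk : k1 < kn := by
      by_contra h
      push_neg at h
      have : (kn:ℝ) ≤ (k1:ℝ) := by exact_mod_cast h
      rw [e1, en] at h1n
      nlinarith
    have : (k1:ℝ) + 1 ≤ (kn:ℝ) := by exact_mod_cast hkk
    rw [e1, en]; nlinarith
  -- closed form of lt 1
  have hlt1 : lt 1 = l 1 + b * (l n - l 1) := by
    show l 1 + (∑ k ∈ Finset.Icc 1 0, (δ ^ (k * d))⁻¹ * (l (1 - k) - l (1 - k + 1)))
        + (δ ^ (1 * d))⁻¹ * (l n - l 1) = _
    rw [Finset.Icc_eq_empty (by omega), Finset.sum_empty, hck]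
    ring
  -- sum recursion
  have hsum : ∀ t : ℕ,
      (∑ k ∈ Finset.Icc 1 (t+1), b ^ k * (l (t+2-k) - l (t+2-k+1)))
      = b * (l (t+1) - l (t+2))
        + b * ∑ k ∈ Finset.Icc 1 t, b ^ k * (l (t+1-k) - l (t+1-k+1)) := by
    intro t
    rw [← Finset.Ico_add_one_right_eq_Icc, ← Finset.Ico_add_one_right_eq_Icc, Finset.sum_Ico_eq_sum_range,
      Finset.sum_Ico_eq_sum_range]
    simp only [show t+1+1-1 = t+1 from rfl, show t+1-1 = t from rfl]
    rw [Finset.sum_range_succ', Finset.mul_sum, add_comm]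
    congr 1
    · norm_num
    · apply Finset.sum_congr rfl
      intro i hi
      have h1 : t + 2 - (1 + (i + 1)) = t - i := by omega
      have h2 : t + 1 - (1 + i) = t - i := by omega
      have h3 : t + 2 - (1 + (i + 1)) + 1 = t - i + 1 := by omega
      rw [h1, h2]
      ring
  -- key recursion for lt
  have key : ∀ t : ℕ, lt (t + 2) = b * lt (t + 1) - (b - 1) * l (t + 2) := by
    intro t
    show l (t+2) + (∑ k ∈ Finset.Icc 1 (t+1), (δ ^ (k * d))⁻¹ * (l (t+2-k) - l (t+2-k+1)))
        + (δ ^ ((t+2) * d))⁻¹ * (l n - l 1)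
      = b * (l (t+1) + (∑ k ∈ Finset.Icc 1 t, (δ ^ (k * d))⁻¹ * (l (t+1-k) - l (t+1-k+1)))
        + (δ ^ ((t+1) * d))⁻¹ * (l n - l 1)) - (b - 1) * l (t+2)
    simp only [hck]
    rw [hsum t]
    ring
  -- main induction: lt m > (b-1)*δ
  have main : ∀ m, 1 ≤ m → m ≤ n → (b - 1) * δ < lt m := by
    intro m hm
    induction m, hm using Nat.le_induction with
    | base =>
      intro _
      rw [hlt1]
      have h0 := (hM 1 le_rfl (by omega)).1
      nlinarith
    | succ m hm ih =>
      intro hmn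
      have ihm := ih (by omega)
      have hlm1 := (hM (m+1) (by omega) hmn).2
      obtain ⟨t, rfl⟩ : ∃ t, m = t + 1 := ⟨m - 1, by omega⟩
      have hk := key t
      have h5 : l (t+2) < lt (t+1) := lt_of_le_of_lt hlm1 ihm
      have h6 : 0 < (b - 1) * (lt (t+1) - l (t+2)) :=
        mul_pos (by linarith) (by linarith)
      nlinarith
  constructor
  · rw [hlt1]
    nlinarith
  · intro j hj2 hjn
    obtain ⟨t, rfl⟩ : ∃ t, j = t + 2 := ⟨j - 2, by omega⟩
    show lt (t + 1) < lt (t + 2)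
    have hk := key t
    have hlm1 := (hM (t+2) (by omega) hjn).2
    have ihm := main (t+1) (by omega) (by omega)
    have h5 : l (t+2) < lt (t+1) := lt_of_le_of_lt hlm1 ihm
    have h6 : 0 < (b - 1) * (lt (t+1) - l (t+2)) :=
      mul_pos (by linarith) (by linarith)
    nlinarith
end
end

section
/- Let c_1 < c_2 and b_1, a_2, b_2, a_3, b_3 ∈ ℝ, and let φ : ℝ → ℝ be given by φ(t) = b_1 for t < c_1, φ(t) = a_2 t + b_2 for c_1 ≤ t < c_2, and φ(t) = a_3 t + b_3 for t ≥ c_2. Then for every ε with 0 < ε < c_2 − c_1, there exist coefficients α_1, α_2, α_3, α_4 ∈ ℝ and shifts β_1, β_2, β_3, β_4 ∈ ℝ such that the function φ̃(t) = b_1 + Σ_{i=1}^4 α_i ReLU(t − β_i) satisfies φ̃(t) = φ(t) for all t ∉ [c_1 − ε, c_1) ∪ [c_2 − ε, c_2). -/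
noncomputable section

/-- A (possibly discontinuous) three-piece piecewise linear function whose first piece
is constant can be written, off two intervals `[c₁−ε, c₁)` and `[c₂−ε, c₂)` of width
`ε`, as `b₁` plus a combination of four ReLUs. -/
theorem stmt_16 (c₁ c₂ b₁ a₂ b₂ a₃ b₃ : ℝ) (hc : c₁ < c₂) (φ : ℝ → ℝ)
    (hφ : ∀ t, φ t = if t < c₁ then b₁ else if t < c₂ then a₂ * t + b₂ else a₃ * t + b₃)
    (ε : ℝ) (hε0 : 0 < ε) (hε : ε < c₂ - c₁) :
    ∃ α β : Fin 4 → ℝ,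
      ∀ t : ℝ, t ∉ Set.Ico (c₁ - ε) c₁ ∪ Set.Ico (c₂ - ε) c₂ →
        b₁ + ∑ i, α i * max (t - β i) 0 = φ t := by
  have hεne : ε ≠ 0 := ne_of_gt hε0
  set α₁ : ℝ := (b₂ + a₂ * c₁ - b₁) / ε with hα₁
  set α₃ : ℝ := (b₃ + (a₃ - a₂) * c₂ - b₂) / ε with hα₃
  refine ⟨![α₁, a₂ - α₁, α₃, (a₃ - a₂) - α₃], ![c₁ - ε, c₁, c₂ - ε, c₂], ?_⟩
  intro t ht
  simp only [Set.mem_union, Set.mem_Ico, not_or, not_and, not_lt] at ht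
  obtain ⟨h1, h2⟩ := ht
  rw [hφ, Fin.sum_univ_four]
  simp only [Matrix.cons_val_zero, Matrix.cons_val_one, Matrix.head_cons,
    Matrix.cons_val_two, Matrix.tail_cons, Matrix.cons_val_three]
  rcases lt_or_ge t (c₁ - ε) with hA | hA
  · have ht1 : t < c₁ := by linarith
    rw [if_pos ht1]
    have m1 : max (t - (c₁ - ε)) 0 = 0 := max_eq_right (by linarith)
    have m2 : max (t - c₁) 0 = 0 := max_eq_right (by linarith)
    have m3 : max (t - (c₂ - ε)) 0 = 0 := max_eq_right (by linarith)
    have m4 : max (t - c₂) 0 = 0 := max_eq_right (by linarith)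
    rw [m1, m2, m3, m4]; ring
  · have ht1 : c₁ ≤ t := h1 hA
    rcases lt_or_ge t (c₂ - ε) with hB | hB
    · have ht2 : t < c₂ := by linarith
      rw [if_neg (not_lt.mpr ht1), if_pos ht2]
      have m1 : max (t - (c₁ - ε)) 0 = t - (c₁ - ε) := max_eq_left (by linarith)
      have m2 : max (t - c₁) 0 = t - c₁ := max_eq_left (by linarith)
      have m3 : max (t - (c₂ - ε)) 0 = 0 := max_eq_right (by linarith)
      have m4 : max (t - c₂) 0 = 0 := max_eq_right (by linarith)
      rw [m1, m2, m3, m4, hα₁]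
      field_simp
      ring
    · have ht2 : c₂ ≤ t := h2 hB
      rw [if_neg (not_lt.mpr ht1), if_neg (not_lt.mpr ht2)]
      have m1 : max (t - (c₁ - ε)) 0 = t - (c₁ - ε) := max_eq_left (by linarith)
      have m2 : max (t - c₁) 0 = t - c₁ := max_eq_left (by linarith)
      have m3 : max (t - (c₂ - ε)) 0 = t - (c₂ - ε) := max_eq_left (by linarith)
      have m4 : max (t - c₂) 0 = t - c₂ := max_eq_left (by linarith)
      rw [m1, m2, m3, m4, hα₁, hα₃]
      field_simp
      ring
end
end

section
/- Let n ≥ 1 and a ∈ ℝ^n, let S = {j : a_j = max_i a_i} and k = |S|. Then for every j ∈ {1, …, n}, the softmax value exp(λ a_j) / Σ_{i=1}^n exp(λ a_i) converges as λ → ∞ to 1/k if j ∈ S and to 0 if j ∉ S; that is, the softmax of λa converges entrywise to the hardmax of a. -/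
open Filter
open scoped Classical

noncomputable section

/-- Softmax of `λa` converges entrywise, as `λ → ∞`, to the hardmax of `a`: the limit
is `1/k` at each of the `k` entries where `a` attains its maximum, and `0` elsewhere. -/
theorem stmt_17 (n : ℕ) (hn : 1 ≤ n) (a : Fin n → ℝ) (j : Fin n) :
    Tendsto (fun lam : ℝ => Real.exp (lam * a j) / ∑ i, Real.exp (lam * a i)) atTop
      (nhds (if ∀ i, a i ≤ a j then
        (((Finset.univ.filter fun i => ∀ i', a i' ≤ a i).card : ℝ))⁻¹
      else 0)) := by
  have hnn : Nonempty (Fin n) := Fin.pos_iff_nonempty.mp hn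
  have hne : (Finset.univ : Finset (Fin n)).Nonempty := Finset.univ_nonempty
  set M := Finset.univ.sup' hne a with hMdef
  have hM : ∀ i, a i ≤ M := fun i => Finset.le_sup' a (Finset.mem_univ i)
  have hcond : ∀ i, (∀ i', a i' ≤ a i) ↔ a i = M := fun i =>
    ⟨fun h => le_antisymm (hM i) (Finset.sup'_le hne a fun i' _ => h i'),
     fun h i' => h ▸ hM i'⟩
  -- rewrite the function
  have key : ∀ lam : ℝ, Real.exp (lam * a j) / ∑ i, Real.exp (lam * a i)
      = Real.exp (lam * (a j - M)) / ∑ i, Real.exp (lam * (a i - M)) := by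
    intro lam
    have hc : Real.exp (lam * M) ≠ 0 := (Real.exp_pos _).ne'
    simp only [mul_sub, Real.exp_sub, ← Finset.sum_div]
    rw [div_div_div_cancel_right₀]
    exact hc
  simp only [key]
  -- termwise limits
  have hterm : ∀ i, Tendsto (fun lam : ℝ => Real.exp (lam * (a i - M))) atTop
      (nhds (if a i = M then (1:ℝ) else 0)) := by
    intro i
    by_cases h : a i = M
    · simpa [h] using (tendsto_const_nhds : Tendsto (fun _ : ℝ => (1:ℝ)) atTop (nhds 1))
    · have hlt : a i - M < 0 := sub_neg.mpr (lt_of_le_of_ne (hM i) h)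
      simp only [if_neg h]
      exact Real.tendsto_exp_atBot.comp (tendsto_id.atTop_mul_const_of_neg hlt)
  set L : ℝ := ∑ i, (if a i = M then (1:ℝ) else 0) with hL
  have hden : Tendsto (fun lam : ℝ => ∑ i, Real.exp (lam * (a i - M))) atTop (nhds L) :=
    tendsto_finset_sum _ fun i _ => hterm i
  have hLcard : L = ((Finset.univ.filter fun i => a i = M).card : ℝ) := by
    simp [hL, Finset.sum_ite_eq, Finset.sum_boole]
  have hLpos : 0 < L := by
    obtain ⟨i0, _, hi0⟩ := Finset.exists_mem_eq_sup' hne a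
    rw [hLcard]
    have : i0 ∈ Finset.univ.filter fun i => a i = M :=
      Finset.mem_filter.mpr ⟨Finset.mem_univ _, hi0.symm⟩
    exact_mod_cast Finset.card_pos.mpr ⟨i0, this⟩
  have hdiv := (hterm j).div hden hLpos.ne'
  convert hdiv using 2
  · rfl
  have hfilter : (Finset.univ.filter fun i => ∀ i', a i' ≤ a i)
      = Finset.univ.filter fun i => a i = M := by
    apply Finset.filter_congr
    intro i _
    simp [hcond i]
  by_cases h : a j = M
  · rw [if_pos ((hcond j).mpr h), if_pos h, hfilter, ← hLcard, one_div]
  · rw [if_neg (fun hh => h ((hcond j).mp hh)), if_neg h, zero_div]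
end
end

section
/- Let d ≥ 1, n ≥ 2, δ ∈ (0, 1/2] with 1/δ ∈ ℕ, and let 1 ≤ n' ≤ n − 1. For any real numbers l'_1 < l'_2 < … < l'_{n'} all belonging to the grid {0, δ, 2δ, …, δ^{−d+1} − δ}, the quantity l̃ = l'_{n'} + Σ_{k=1}^{n'−1} δ^{−kd}(l'_{n'−k} − l'_{n'−k+1}) + δ^{−n'd}(l'_{n'} − l'_1) satisfies l̃ ≤ δ^{−n'd+1}(δ^{−d} − 1) − δ(δ^{−d} − 1)^2 < δ^{−(n−1)d+1}(δ^{−d} − 1); in particular, l̃ is strictly smaller than the value δ^{−(n−1)d+1}(δ^{−d} − 1), which is a lower bound for the corresponding quantity computed from any n strictly increasing grid values. -/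
noncomputable section

/-- For `1 ≤ n' ≤ n − 1` and strictly increasing grid values `l'_1 < … < l'_{n'}` in
`{0, δ, …, δ^{−d+1} − δ}` (with `δ = 1/N ≤ 1/2`), the quantity
`l̃ = l'_{n'} + Σ_{k=1}^{n'−1} δ^{−kd}(l'_{n'−k} − l'_{n'−k+1}) + δ^{−n'd}(l'_{n'} − l'_1)`
satisfies `l̃ ≤ δ^{−n'd+1}(δ^{−d} − 1) − δ(δ^{−d} − 1)² < δ^{−(n−1)d+1}(δ^{−d} − 1)`,
the latter being a lower bound for the corresponding quantity from `n` strictly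
increasing grid values. -/
theorem stmt_19 (d n n' N : ℕ) (hd : 1 ≤ d) (hn : 2 ≤ n)
    (hn'1 : 1 ≤ n') (hn'2 : n' ≤ n - 1) (δ : ℝ)
    (hδ0 : 0 < δ) (hδhalf : δ ≤ 1 / 2) (hδN : δ * N = 1)
    (l : ℕ → ℝ)
    (hmono : ∀ j j' : ℕ, 1 ≤ j → j < j' → j' ≤ n' → l j < l j')
    (hgrid : ∀ j : ℕ, 1 ≤ j → j ≤ n' → ∃ k : ℕ, k < N ^ d ∧ l j = (k : ℝ) * δ) :
    let lt : ℝ :=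
      l n' + (∑ k ∈ Finset.Icc 1 (n' - 1), (δ ^ (k * d))⁻¹ * (l (n' - k) - l (n' - k + 1)))
        + (δ ^ (n' * d))⁻¹ * (l n' - l 1)
    lt ≤ δ * (δ ^ (n' * d))⁻¹ * ((δ ^ d)⁻¹ - 1) - δ * ((δ ^ d)⁻¹ - 1) ^ 2 ∧
    δ * (δ ^ (n' * d))⁻¹ * ((δ ^ d)⁻¹ - 1) - δ * ((δ ^ d)⁻¹ - 1) ^ 2
      < δ * (δ ^ ((n - 1) * d))⁻¹ * ((δ ^ d)⁻¹ - 1) := by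
  intro lt
  set A : ℝ := (δ ^ d)⁻¹ with hAdef
  have hδd : (0:ℝ) < δ ^ d := pow_pos hδ0 d
  have hN2 : (2:ℝ) ≤ (N : ℝ) := by nlinarith
  have hAN : A = (N : ℝ) ^ d := by
    have h : δ ^ d * (N:ℝ) ^ d = 1 := by
      rw [← mul_pow, hδN, one_pow]
    rw [hAdef, ← one_div, div_eq_iff hδd.ne']
    linarith [h]
  have hA2 : (2:ℝ) ≤ A := by
    rw [hAN]
    calc (2:ℝ) = 2 ^ 1 := by norm_num
    _ ≤ (2:ℝ) ^ d := pow_le_pow_right₀ (by norm_num) hd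
    _ ≤ (N:ℝ) ^ d := pow_le_pow_left₀ (by norm_num) hN2 d
  have hA1 : (1:ℝ) ≤ A := by linarith
  have hpow : ∀ k : ℕ, (δ ^ (k * d))⁻¹ = A ^ k := by
    intro k
    rw [mul_comm, pow_mul, hAdef, inv_pow]
  -- grid bounds
  have hub : ∀ j : ℕ, 1 ≤ j → j ≤ n' → l j ≤ δ * (A - 1) := by
    intro j h1 h2
    obtain ⟨k, hk, hl⟩ := hgrid j h1 h2
    have hk' : (k:ℝ) ≤ (N:ℝ) ^ d - 1 := by
      have : (k:ℝ) + 1 ≤ ((N:ℕ) ^ d : ℕ) := by exact_mod_cast hk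
      push_cast at this
      linarith
    rw [hl, ← hAN] at *
    nlinarith
  have hlb : ∀ j : ℕ, 1 ≤ j → j ≤ n' → 0 ≤ l j := by
    intro j h1 h2
    obtain ⟨k, hk, hl⟩ := hgrid j h1 h2
    rw [hl]; positivity
  -- telescoping
  have htel : ∑ k ∈ Finset.Icc 1 (n' - 1), (l (n' - k + 1) - l (n' - k)) = l n' - l 1 := by
    have h1 : Finset.Icc 1 (n' - 1) = Finset.image (· + 1) (Finset.range (n' - 1)) := by
      ext x
      simp only [Finset.mem_Icc, Finset.mem_image, Finset.mem_range]
      constructor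
      · rintro ⟨ha, hb⟩; exact ⟨x - 1, by omega, by omega⟩
      · rintro ⟨y, hy, rfl⟩; omega
    rw [h1, Finset.sum_image (by intro a _ b _ h; exact Nat.add_right_cancel h)]
    have h2 : ∀ j ∈ Finset.range (n' - 1),
        (l (n' - (j + 1) + 1) - l (n' - (j + 1))) = (l (n' - j) - l (n' - (j + 1))) := by
      intro j hj
      simp only [Finset.mem_range] at hj
      congr 2
      omega
    rw [Finset.sum_congr rfl h2]
    have h3 := Finset.sum_range_sub' (fun j => l (n' - j)) (n' - 1)
    rw [h3]
    have h4 : n' - 0 = n' := by omega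
    have h5 : n' - (n' - 1) = 1 := by omega
    rw [h4, h5]
  -- rewrite lt
  have hrw : lt = l n' +
      ∑ k ∈ Finset.Icc 1 (n' - 1), (A ^ n' - A ^ k) * (l (n' - k + 1) - l (n' - k)) := by
    show l n' + (∑ k ∈ Finset.Icc 1 (n' - 1), (δ ^ (k * d))⁻¹ * (l (n' - k) - l (n' - k + 1)))
        + (δ ^ (n' * d))⁻¹ * (l n' - l 1) = _
    rw [hpow n', ← htel, Finset.mul_sum, add_assoc, ← Finset.sum_add_distrib]
    congr 1
    apply Finset.sum_congr rfl
    intro k _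
    rw [hpow k]
    ring
  -- nonneg differences
  have hdiff : ∀ k ∈ Finset.Icc 1 (n' - 1), 0 ≤ l (n' - k + 1) - l (n' - k) := by
    intro k hk
    simp only [Finset.mem_Icc] at hk
    have := hmono (n' - k) (n' - k + 1) (by omega) (by omega) (by omega)
    linarith
  -- bound the sum
  have hsum : ∑ k ∈ Finset.Icc 1 (n' - 1), (A ^ n' - A ^ k) * (l (n' - k + 1) - l (n' - k))
      ≤ (A ^ n' - A) * (l n' - l 1) := by
    rw [← htel, Finset.mul_sum]
    apply Finset.sum_le_sum
    intro k hk
    simp only [Finset.mem_Icc] at hk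
    apply mul_le_mul_of_nonneg_right _ (hdiff k (by simp [Finset.mem_Icc]; omega))
    have : A ^ 1 ≤ A ^ k := pow_le_pow_right₀ hA1 hk.1
    simp only [pow_one] at this
    linarith
  have hApow1 : A ≤ A ^ n' := by
    calc A = A ^ 1 := (pow_one A).symm
    _ ≤ A ^ n' := pow_le_pow_right₀ hA1 hn'1
  have hln' : l n' ≤ δ * (A - 1) := hub n' hn'1 le_rfl
  have hl1 : 0 ≤ l 1 := hlb 1 le_rfl hn'1
  have hfact : (A ^ n' - A) * (l n' - l 1) ≤ (A ^ n' - A) * (δ * (A - 1)) := by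
    apply mul_le_mul_of_nonneg_left _ (by linarith)
    linarith
  have hmain : lt ≤ δ * A ^ n' * (A - 1) - δ * (A - 1) ^ 2 := by
    rw [hrw]
    nlinarith [hsum, hfact, hln']
  constructor
  · rw [hpow n'] at *
    exact hmain
  · rw [hpow n', hpow (n - 1)]
    have hpowle : A ^ n' ≤ A ^ (n - 1) := pow_le_pow_right₀ hA1 hn'2
    have h1 : δ * (A - 1) * A ^ n' ≤ δ * (A - 1) * A ^ (n - 1) :=
      mul_le_mul_of_nonneg_left hpowle (by nlinarith)
    have h2 : 0 < δ * (A - 1) ^ 2 := by nlinarith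
    nlinarith [h1, h2]
end
end
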